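/- Let $Q$ be the rotation of $\mathbb{R}^2$ by $2\pi/3$. The space of totally symmetric 4-tensors $A \in (\mathbb{R}^2)^{\otimes 4}$ satisfying $Q^{\otimes 4}A = A$ is one-dimensional, spanned by $E_{1111} + E_{2222} + 2\,\mathrm{sym}\,E_{1122}$; equivalently every such $A$ has entries $A_{abcd} = c(\delta_{ab}\delta_{cd} + \delta_{ac}\delta_{bd} + \delta_{ad}\delta_{bc})$ for some scalar $c$. -/

import Mathlib

open Finset Matrix

noncomputable def Qtri : Matrix (Fin 2) (Fin 2) ℝ :=
  !![-(1/2 : ℝ), -(Real.sqrt 3 / 2); Real.sqrt 3 / 2, -(1/2 : ℝ)]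

noncomputable def tpow4 (B : Matrix (Fin 2) (Fin 2) ℝ)
    (A : (Fin 4 → Fin 2) → ℝ) : (Fin 4 → Fin 2) → ℝ :=
  fun l => ∑ k : Fin 4 → Fin 2, A k * ∏ i, B (l i) (k i)

noncomputable def sym4 (A : (Fin 4 → Fin 2) → ℝ) : (Fin 4 → Fin 2) → ℝ :=
  fun l => ((Nat.factorial 4 : ℝ))⁻¹ * ∑ φ : Equiv.Perm (Fin 4), A (l ∘ φ)

def E4 (i j k m : Fin 2) : (Fin 4 → Fin 2) → ℝ :=
  fun l => if l 0 = i ∧ l 1 = j ∧ l 2 = k ∧ l 3 = m then 1 else 0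

noncomputable def T4 : (Fin 4 → Fin 2) → ℝ :=
  E4 0 0 0 0 + E4 1 1 1 1 + (2 : ℝ) • sym4 (E4 0 0 1 1)

/-! ### Auxiliary machinery -/

def N4 : (Fin 4 → Fin 2) → ℕ := fun l =>
  (if l 0 = l 1 then 1 else 0) * (if l 2 = l 3 then 1 else 0)
    + (if l 0 = l 2 then 1 else 0) * (if l 1 = l 3 then 1 else 0)
    + (if l 0 = l 3 then 1 else 0) * (if l 1 = l 2 then 1 else 0)

lemma N4_perm : ∀ (l : Fin 4 → Fin 2) (φ : Equiv.Perm (Fin 4)), N4 (l ∘ φ) = N4 l := by decide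

lemma M4_count : ∀ (l : Fin 4 → Fin 2),
    24 * (if l 0 = 0 ∧ l 1 = 0 ∧ l 2 = 0 ∧ l 3 = 0 then 1 else 0)
      + 24 * (if l 0 = 1 ∧ l 1 = 1 ∧ l 2 = 1 ∧ l 3 = 1 then 1 else 0)
      + 2 * (∑ φ : Equiv.Perm (Fin 4),
          if l (φ 0) = 0 ∧ l (φ 1) = 0 ∧ l (φ 2) = 1 ∧ l (φ 3) = 1 then 1 else 0)
      = 8 * N4 l := by decide

lemma sum_pi4 (f : (Fin 4 → Fin 2) → ℝ) :
    ∑ k : Fin 4 → Fin 2, f k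
      = ∑ a : Fin 2, ∑ b : Fin 2, ∑ c : Fin 2, ∑ d : Fin 2, f ![a,b,c,d] := by
  have h1 : ∑ k : Fin 4 → Fin 2, f k
      = ∑ p : Fin 2 × Fin 2 × Fin 2 × Fin 2, f ![p.1,p.2.1,p.2.2.1,p.2.2.2] :=
    (Fintype.sum_bijective
      (fun p : Fin 2 × Fin 2 × Fin 2 × Fin 2 => ![p.1,p.2.1,p.2.2.1,p.2.2.2])
      (by decide) _ _ (fun p => rfl)).symm
  rw [h1]; simp [Fintype.sum_prod_type]

lemma fin2 (v : Fin 2) : v = 0 ∨ v = 1 := by omega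

lemma eta4 (l : Fin 4 → Fin 2) : l = ![l 0, l 1, l 2, l 3] := by
  funext i; fin_cases i <;> rfl

lemma perm_eq (A : (Fin 4 → Fin 2) → ℝ) (h : sym4 A = A) (l : Fin 4 → Fin 2)
    (φ : Equiv.Perm (Fin 4)) : A (l ∘ φ) = A l := by
  conv_lhs => rw [← h]
  conv_rhs => rw [← h]
  unfold sym4
  exact congrArg _ (Fintype.sum_equiv (Equiv.mulLeft φ) _ _ (fun ψ => rfl))

lemma castN4 (l : Fin 4 → Fin 2) : ((N4 l : ℝ))
    = (if l 0 = l 1 then (1:ℝ) else 0) * (if l 2 = l 3 then (1:ℝ) else 0)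
      + (if l 0 = l 2 then (1:ℝ) else 0) * (if l 1 = l 3 then (1:ℝ) else 0)
      + (if l 0 = l 3 then (1:ℝ) else 0) * (if l 1 = l 2 then (1:ℝ) else 0) := by
  unfold N4; push_cast; ring

lemma hs3 : Real.sqrt 3 ^ 2 = 3 := Real.sq_sqrt (by norm_num)

lemma GR_symm (l : Fin 4 → Fin 2) : sym4 (fun l => (N4 l : ℝ)) l = (N4 l : ℝ) := by
  have h : ∀ φ : Equiv.Perm (Fin 4), ((fun l => (N4 l : ℝ)) (l ∘ φ)) = (N4 l : ℝ) := by
    intro φ; simp only; rw [N4_perm]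
  simp only [sym4]
  rw [Fintype.sum_congr _ _ h, Finset.sum_const, Finset.card_univ, Fintype.card_perm]
  norm_num [Nat.factorial]
  ring

lemma tpow4_mul (B : Matrix (Fin 2) (Fin 2) ℝ) (c : ℝ) (f : (Fin 4 → Fin 2) → ℝ) :
    tpow4 B (fun l => c * f l) = fun l => c * tpow4 B f l := by
  funext l; simp [tpow4, Finset.mul_sum, mul_assoc]

lemma sym4_mul (c : ℝ) (f : (Fin 4 → Fin 2) → ℝ) :
    sym4 (fun l => c * f l) = fun l => c * sym4 f l := by
  funext l
  simp only [sym4, Finset.mul_sum]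
  refine Finset.sum_congr rfl fun φ _ => ?_
  show ((Nat.factorial 4 : ℝ))⁻¹ * (c * f (l ∘ φ)) = c * (((Nat.factorial 4 : ℝ))⁻¹ * f (l ∘ φ))
  ring

set_option maxHeartbeats 4000000 in
lemma GR_inv : ∀ l, tpow4 Qtri (fun l => (N4 l : ℝ)) l = (N4 l : ℝ) := by
  have H : ∀ a b c d : Fin 2,
      tpow4 Qtri (fun l => (N4 l : ℝ)) ![a,b,c,d] = (N4 ![a,b,c,d] : ℝ) := by
    intro a b c d
    have hs := hs3
    rcases fin2 a with rfl | rfl <;> rcases fin2 b with rfl | rfl <;>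
      rcases fin2 c with rfl | rfl <;> rcases fin2 d with rfl | rfl <;>
    · simp only [tpow4]
      rw [sum_pi4]
      simp only [Fin.sum_univ_two, Fin.prod_univ_four, Qtri, Matrix.cons_val_zero,
    Matrix.cons_val_one, Matrix.head_cons, Matrix.cons_val', Matrix.empty_val',
    Matrix.cons_val_fin_one, Matrix.head_fin_const, Matrix.of_apply, Matrix.cons_val_three,
    Matrix.cons_val_two, Matrix.tail_cons]
      norm_num [N4, Matrix.cons_val_two, Matrix.cons_val_three, Matrix.tail_cons, Matrix.head_cons]
      first
        | linear_combination (15/16 + 3/16 * Real.sqrt 3 ^ 2) * hs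
        | linear_combination (5/16 + 1/16 * Real.sqrt 3 ^ 2) * hs
        | linear_combination (0 : ℝ) * hs
  intro l
  rw [eta4 l]
  exact H (l 0) (l 1) (l 2) (l 3)

lemma T4_val (l : Fin 4 → Fin 2) : T4 l = (1/3 : ℝ) * (N4 l : ℝ) := by
  have h := M4_count l
  have h' : 24 * (if l 0 = 0 ∧ l 1 = 0 ∧ l 2 = 0 ∧ l 3 = 0 then (1:ℝ) else 0)
      + 24 * (if l 0 = 1 ∧ l 1 = 1 ∧ l 2 = 1 ∧ l 3 = 1 then (1:ℝ) else 0)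
      + 2 * (∑ φ : Equiv.Perm (Fin 4),
          if l (φ 0) = 0 ∧ l (φ 1) = 0 ∧ l (φ 2) = 1 ∧ l (φ 3) = 1 then (1:ℝ) else 0)
      = 8 * (N4 l : ℝ) := by exact_mod_cast h
  have hf : ((Nat.factorial 4 : ℕ) : ℝ) = 24 := by norm_num [Nat.factorial]
  simp only [T4, Pi.add_apply, Pi.smul_apply, smul_eq_mul, E4, sym4, Function.comp_apply, hf]
  linarith [h']

set_option maxHeartbeats 4000000 in
lemma key (A : (Fin 4 → Fin 2) → ℝ) :
    (tpow4 Qtri A = A ∧ sym4 A = A) ↔ ∃ c : ℝ, ∀ l, A l = c * (N4 l : ℝ) := by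
  constructor
  · rintro ⟨hinv, hsymA⟩
    have c0010 : A ![0,0,1,0] = A ![0,0,0,1] := by
      have hx := perm_eq A hsymA ![0,0,0,1] (Equiv.swap 2 3)
      rwa [show ((![0,0,0,1] : Fin 4 → Fin 2) ∘ ⇑(Equiv.swap 2 3 : Equiv.Perm (Fin 4))) = ![0,0,1,0] from by decide] at hx
    have c0100 : A ![0,1,0,0] = A ![0,0,0,1] := by
      have hx := perm_eq A hsymA ![0,0,0,1] (Equiv.swap 1 2 * Equiv.swap 1 3)
      rwa [show ((![0,0,0,1] : Fin 4 → Fin 2) ∘ ⇑(Equiv.swap 1 2 * Equiv.swap 1 3 : Equiv.Perm (Fin 4))) = ![0,1,0,0] from by decide] at hx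
    have c0101 : A ![0,1,0,1] = A ![0,0,1,1] := by
      have hx := perm_eq A hsymA ![0,0,1,1] (Equiv.swap 1 2)
      rwa [show ((![0,0,1,1] : Fin 4 → Fin 2) ∘ ⇑(Equiv.swap 1 2 : Equiv.Perm (Fin 4))) = ![0,1,0,1] from by decide] at hx
    have c0110 : A ![0,1,1,0] = A ![0,0,1,1] := by
      have hx := perm_eq A hsymA ![0,0,1,1] (Equiv.swap 1 3 * Equiv.swap 1 2)
      rwa [show ((![0,0,1,1] : Fin 4 → Fin 2) ∘ ⇑(Equiv.swap 1 3 * Equiv.swap 1 2 : Equiv.Perm (Fin 4))) = ![0,1,1,0] from by decide] at hx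
    have c1000 : A ![1,0,0,0] = A ![0,0,0,1] := by
      have hx := perm_eq A hsymA ![0,0,0,1] (Equiv.swap 0 1 * Equiv.swap 0 2 * Equiv.swap 0 3)
      rwa [show ((![0,0,0,1] : Fin 4 → Fin 2) ∘ ⇑(Equiv.swap 0 1 * Equiv.swap 0 2 * Equiv.swap 0 3 : Equiv.Perm (Fin 4))) = ![1,0,0,0] from by decide] at hx
    have c1001 : A ![1,0,0,1] = A ![0,0,1,1] := by
      have hx := perm_eq A hsymA ![0,0,1,1] (Equiv.swap 0 1 * Equiv.swap 0 2)
      rwa [show ((![0,0,1,1] : Fin 4 → Fin 2) ∘ ⇑(Equiv.swap 0 1 * Equiv.swap 0 2 : Equiv.Perm (Fin 4))) = ![1,0,0,1] from by decide] at hx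
    have c1010 : A ![1,0,1,0] = A ![0,0,1,1] := by
      have hx := perm_eq A hsymA ![0,0,1,1] (Equiv.swap 0 1 * Equiv.swap 0 3 * Equiv.swap 0 2)
      rwa [show ((![0,0,1,1] : Fin 4 → Fin 2) ∘ ⇑(Equiv.swap 0 1 * Equiv.swap 0 3 * Equiv.swap 0 2 : Equiv.Perm (Fin 4))) = ![1,0,1,0] from by decide] at hx
    have c1011 : A ![1,0,1,1] = A ![0,1,1,1] := by
      have hx := perm_eq A hsymA ![0,1,1,1] (Equiv.swap 0 1)
      rwa [show ((![0,1,1,1] : Fin 4 → Fin 2) ∘ ⇑(Equiv.swap 0 1 : Equiv.Perm (Fin 4))) = ![1,0,1,1] from by decide] at hx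
    have c1100 : A ![1,1,0,0] = A ![0,0,1,1] := by
      have hx := perm_eq A hsymA ![0,0,1,1] (Equiv.swap 0 2 * Equiv.swap 1 3)
      rwa [show ((![0,0,1,1] : Fin 4 → Fin 2) ∘ ⇑(Equiv.swap 0 2 * Equiv.swap 1 3 : Equiv.Perm (Fin 4))) = ![1,1,0,0] from by decide] at hx
    have c1101 : A ![1,1,0,1] = A ![0,1,1,1] := by
      have hx := perm_eq A hsymA ![0,1,1,1] (Equiv.swap 0 2 * Equiv.swap 0 1)
      rwa [show ((![0,1,1,1] : Fin 4 → Fin 2) ∘ ⇑(Equiv.swap 0 2 * Equiv.swap 0 1 : Equiv.Perm (Fin 4))) = ![1,1,0,1] from by decide] at hx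
    have c1110 : A ![1,1,1,0] = A ![0,1,1,1] := by
      have hx := perm_eq A hsymA ![0,1,1,1] (Equiv.swap 0 3 * Equiv.swap 0 2 * Equiv.swap 0 1)
      rwa [show ((![0,1,1,1] : Fin 4 → Fin 2) ∘ ⇑(Equiv.swap 0 3 * Equiv.swap 0 2 * Equiv.swap 0 1 : Equiv.Perm (Fin 4))) = ![1,1,1,0] from by decide] at hx
    have hs := hs3
    have e0 := congrFun hinv ![0,0,0,0]
    have e1 := congrFun hinv ![0,0,0,1]
    have e2 := congrFun hinv ![0,0,1,1]
    have e3 := congrFun hinv ![0,1,1,1]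
    simp only [tpow4] at e0 e1 e2 e3
    rw [sum_pi4] at e0 e1 e2 e3
    simp only [Fin.sum_univ_two, Fin.prod_univ_four, Qtri, Matrix.cons_val_zero,
    Matrix.cons_val_one, Matrix.head_cons, Matrix.cons_val', Matrix.empty_val',
    Matrix.cons_val_fin_one, Matrix.head_fin_const, Matrix.of_apply, Matrix.cons_val_three,
    Matrix.cons_val_two, Matrix.tail_cons] at e0 e1 e2 e3
    simp only [c0010, c0100, c0101, c0110, c1000, c1001, c1010, c1100, c1011, c1101, c1110]
      at e0 e1 e2 e3
    have hp1 : A ![0,0,0,1] = 0 := by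
      linear_combination ((1/12) * Real.sqrt 3) * e0 + ((-1/2)) * e1 + ((1/4) * Real.sqrt 3) * e2
        - (((1/64) * Real.sqrt 3) * (A ![0,0,0,0]) + ((17/96) + (1/32) * Real.sqrt 3 ^ 2) * (A ![0,0,0,1]) + ((7/64) * Real.sqrt 3 + (1/64) * Real.sqrt 3 ^ 3) * (A ![0,0,1,1]) + ((1/48) * Real.sqrt 3 ^ 2) * (A ![0,1,1,1]) + ((1/192) * Real.sqrt 3 ^ 3) * (A ![1,1,1,1])) * hs
    have hp3 : A ![0,1,1,1] = 0 := by
      linear_combination ((1/12) * Real.sqrt 3) * e0 + ((-1/12) * Real.sqrt 3) * e2 + ((-1/2)) * e3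
        - (((5/192) * Real.sqrt 3) * (A ![0,0,0,0]) + ((1/48) * Real.sqrt 3 ^ 2) * (A ![0,0,0,1]) + ((-11/192) * Real.sqrt 3 + (-1/192) * Real.sqrt 3 ^ 3) * (A ![0,0,1,1]) + ((17/96) + (1/32) * Real.sqrt 3 ^ 2) * (A ![0,1,1,1]) + ((1/96) * Real.sqrt 3 + (1/192) * Real.sqrt 3 ^ 3) * (A ![1,1,1,1])) * hs
    have hp0 : A ![0,0,0,0] = 3 * A ![0,0,1,1] := by
      linear_combination ((-1/2)) * e0 + ((1/6) * Real.sqrt 3) * e1 + ((3/2)) * e2 + ((-1/2) * Real.sqrt 3) * e3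
        - (((17/96) + (1/32) * Real.sqrt 3 ^ 2) * (A ![0,0,0,0]) + ((5/32) * Real.sqrt 3 + (1/32) * Real.sqrt 3 ^ 3) * (A ![0,0,0,1]) + ((-17/32) + (-1/32) * Real.sqrt 3 ^ 2) * (A ![0,0,1,1]) + ((-7/32) * Real.sqrt 3 + (-1/96) * Real.sqrt 3 ^ 3) * (A ![0,1,1,1]) + ((-1/48) * Real.sqrt 3 ^ 2) * (A ![1,1,1,1])) * hs
    have hp4 : A ![1,1,1,1] = 3 * A ![0,0,1,1] := by
      linear_combination ((1/2)) * e0 + ((1/2) * Real.sqrt 3) * e1 + ((5/2)) * e2 + ((-1/6) * Real.sqrt 3) * e3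
        - (((5/32) + (1/96) * Real.sqrt 3 ^ 2) * (A ![0,0,0,0]) + ((7/32) * Real.sqrt 3 + (1/96) * Real.sqrt 3 ^ 3) * (A ![0,0,0,1]) + ((-7/32) + (1/32) * Real.sqrt 3 ^ 2) * (A ![0,0,1,1]) + ((-5/32) * Real.sqrt 3 + (-1/32) * Real.sqrt 3 ^ 3) * (A ![0,1,1,1]) + ((1/3) + (1/16) * Real.sqrt 3 ^ 2) * (A ![1,1,1,1])) * hs
    refine ⟨A ![0,0,1,1], fun l => ?_⟩
    rw [eta4 l]
    have H : ∀ a b c d : Fin 2, A ![a,b,c,d] = A ![0,0,1,1] * (N4 ![a,b,c,d] : ℝ) := by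
      intro a b c d
      rcases fin2 a with rfl | rfl <;> rcases fin2 b with rfl | rfl <;>
        rcases fin2 c with rfl | rfl <;> rcases fin2 d with rfl | rfl <;>
        (try simp only [c0010, c0100, c0101, c0110, c1000, c1001, c1010, c1100, c1011, c1101,
          c1110, hp0, hp1, hp3, hp4]) <;>
        norm_num [N4, Matrix.cons_val_two, Matrix.cons_val_three, Matrix.tail_cons, Matrix.head_cons] <;> try ring
    exact H (l 0) (l 1) (l 2) (l 3)
  · rintro ⟨c, hc⟩
    have hA : A = fun l => c * (N4 l : ℝ) := funext fun l => hc l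
    rw [hA]
    constructor
    · rw [tpow4_mul]
      funext l
      rw [GR_inv l]
    · rw [sym4_mul]
      funext l
      rw [GR_symm l]

theorem stmt3 :
    {A : (Fin 4 → Fin 2) → ℝ | tpow4 Qtri A = A ∧ sym4 A = A}
      = (Submodule.span ℝ {T4} : Submodule ℝ ((Fin 4 → Fin 2) → ℝ)) ∧
    T4 ≠ 0 ∧
    (∀ A : (Fin 4 → Fin 2) → ℝ, (tpow4 Qtri A = A ∧ sym4 A = A) ↔
      ∃ c : ℝ, ∀ l : Fin 4 → Fin 2,
        A l = c * ((if l 0 = l 1 then (1:ℝ) else 0) * (if l 2 = l 3 then (1:ℝ) else 0)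
          + (if l 0 = l 2 then (1:ℝ) else 0) * (if l 1 = l 3 then (1:ℝ) else 0)
          + (if l 0 = l 3 then (1:ℝ) else 0) * (if l 1 = l 2 then (1:ℝ) else 0))) := by
  refine ⟨?_, ?_, ?_⟩
  · ext A
    simp only [Set.mem_setOf_eq, SetLike.mem_coe, Submodule.mem_span_singleton]
    rw [key A]
    constructor
    · rintro ⟨c, hc⟩
      refine ⟨3 * c, funext fun l => ?_⟩
      rw [Pi.smul_apply, smul_eq_mul, T4_val l, hc l]
      ring
    · rintro ⟨a, rfl⟩
      refine ⟨a / 3, fun l => ?_⟩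
      rw [Pi.smul_apply, smul_eq_mul, T4_val l]
      ring
  · intro h
    have h0 := congrFun h (fun _ => 0)
    rw [T4_val] at h0
    norm_num [N4] at h0
  · intro A
    rw [key A]
    exact exists_congr fun c => forall_congr' fun l => by rw [castN4 l]
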